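/- Every complete graph K_{k+1} with k odd admits a decomposition of its edge set into (k-1)/2 edge-disjoint Hamilton cycles and one perfect matching, together with a matching containing one edge from each of the (k-1)/2 Hamilton cycles (and no edge of the perfect matching). -/

import Mathlib

open SimpleGraph List

namespace Stmt5Aux

variable {c : ℕ}

/-- the "infinity" vertex -/
def inf (c : ℕ) : Fin (2*c+2) := Fin.last (2*c+1)

/-- embedding of `ZMod (2c+1)` into the vertex set -/
def emb (x : ZMod (2*c+1)) : Fin (2*c+2) := ⟨x.val, by have := ZMod.val_lt x; omega⟩

lemma emb_ne_inf (x : ZMod (2*c+1)) : emb x ≠ inf c := by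
  have := ZMod.val_lt x
  simp only [emb, inf, Fin.last, Fin.mk.injEq, Ne, Fin.ext_iff]
  omega

lemma emb_inj {x y : ZMod (2*c+1)} (h : emb x = emb y) : x = y := by
  have := congrArg Fin.val h
  simp only [emb] at this
  exact ZMod.val_injective _ this

/-- build a walk in the complete graph from a vertex sequence -/
def mkWalk (g : ℕ → Fin (2*c+2)) : (L : ℕ) → (∀ t < L, g t ≠ g (t+1)) →
    (⊤ : SimpleGraph (Fin (2*c+2))).Walk (g 0) (g L)
  | 0, _ => .nil
  | (L+1), h => (mkWalk g L fun t ht => h t (by omega)).concat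
      (by simpa using h L (by omega))

lemma support_mkWalk (g : ℕ → Fin (2*c+2)) (L : ℕ) (h : ∀ t < L, g t ≠ g (t+1)) :
    (mkWalk g L h).support = (List.range (L+1)).map g := by
  induction L with
  | zero => simp [mkWalk, List.range_succ]
  | succ L ih =>
      rw [mkWalk, SimpleGraph.Walk.support_concat, ih, List.range_succ (n := L+1)]
      simp

lemma edges_mkWalk (g : ℕ → Fin (2*c+2)) (L : ℕ) (h : ∀ t < L, g t ≠ g (t+1)) :
    (mkWalk g L h).edges = (List.range L).map (fun t => s(g t, g (t+1))) := by
  induction L with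
  | zero => simp [mkWalk, List.range_succ]
  | succ L ih =>
      rw [mkWalk, SimpleGraph.Walk.edges_concat, ih, List.range_succ (n := L)]
      simp

lemma mkWalk_not_nil (g : ℕ → Fin (2*c+2)) (L : ℕ) (hL : 0 < L) (h : ∀ t < L, g t ≠ g (t+1)) :
    ¬ (mkWalk g L h).Nil := by
  have hs := support_mkWalk g L h
  intro hn
  have := SimpleGraph.Walk.nil_iff_length_eq.mp hn
  have hlen : (mkWalk g L h).support.length = (mkWalk g L h).length + 1 :=
    SimpleGraph.Walk.length_support _
  rw [hs] at hlen
  simp at hlen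
  omega
/-- cast injectivity below the modulus -/
lemma cast_inj {a b : ℕ} (ha : a < 2*c+1) (hb : b < 2*c+1)
    (h : (a : ZMod (2*c+1)) = b) : a = b := by
  have := congrArg ZMod.val h
  rwa [ZMod.val_cast_of_lt ha, ZMod.val_cast_of_lt hb] at this

lemma cast_ne_zero {a : ℕ} (h0 : 0 < a) (h : a < 2*c+1) : (a : ZMod (2*c+1)) ≠ 0 := by
  intro hz
  have h1 : ((a:ℕ) : ZMod (2*c+1)) = ((0:ℕ) : ZMod (2*c+1)) := by simpa using hz
  have := cast_inj h (by omega) h1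
  omega

lemma natCast_val (x : ZMod (2*c+1)) : ((x.val : ℕ) : ZMod (2*c+1)) = x :=
  ZMod.natCast_rightInverse x

/-- the zig-zag sequence 0, 1, -1, 2, -2, ... -/
def zig (c t : ℕ) : ZMod (2*c+1) := if t % 2 = 1 then ((t+1)/2 : ℕ) else -((t/2 : ℕ))

lemma zig_even (b : ℕ) : zig c (2*b) = -(b : ZMod (2*c+1)) := by
  simp [zig, Nat.mul_div_cancel_left, Nat.mul_mod_right]

lemma zig_odd (b : ℕ) : zig c (2*b+1) = ((b : ZMod (2*c+1)) + 1) := by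
  have h1 : (2*b+1) % 2 = 1 := by omega
  have h2 : (2*b+1+1)/2 = b+1 := by omega
  simp [zig, h1, h2]

lemma zig_zero : zig c 0 = 0 := by simpa using zig_even (c := c) 0

lemma zig_inj {t t' : ℕ} (ht : t < 2*c+1) (ht' : t' < 2*c+1) (h : zig c t = zig c t') :
    t = t' := by
  rcases Nat.even_or_odd t with ⟨a, ha⟩ | ⟨a, ha⟩ <;>
    rcases Nat.even_or_odd t' with ⟨b, hb⟩ | ⟨b, hb⟩ <;> subst ha hb
  · -- both even
    rw [show a + a = 2*a by ring, show b + b = 2*b by ring] at *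
    rw [zig_even, zig_even, neg_inj] at h
    have := cast_inj (by omega) (by omega) h; omega
  · -- t even, t' odd
    rw [show a + a = 2*a by ring] at *
    rw [zig_even, zig_odd] at h
    have h2 : ((b + 1 + a : ℕ) : ZMod (2*c+1)) = 0 := by push_cast; linear_combination -h
    have h3 := cast_ne_zero (c := c) (a := b + 1 + a) (by omega) (by omega)
    exact absurd h2 h3
  · rw [show b + b = 2*b by ring] at *
    rw [zig_even, zig_odd] at h
    have h2 : ((a + 1 + b : ℕ) : ZMod (2*c+1)) = 0 := by push_cast; linear_combination h
    have h3 := cast_ne_zero (c := c) (a := a + 1 + b) (by omega) (by omega)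
    exact absurd h2 h3
  · rw [zig_odd, zig_odd] at h
    have : (a : ZMod (2*c+1)) = b := by linear_combination h
    have := cast_inj (by omega) (by omega) this; omega

lemma zig_surj (a : ZMod (2*c+1)) : ∃ t < 2*c+1, zig c t = a := by
  have hv := ZMod.val_lt a
  rcases Nat.lt_or_ge a.val (c+1) with h | h
  · rcases Nat.eq_zero_or_pos a.val with h0 | h0
    · exact ⟨0, by omega, by rw [zig_zero]; rw [← natCast_val a, h0]; simp⟩
    · refine ⟨2*(a.val - 1)+1, by omega, ?_⟩
      rw [zig_odd]
      have h1 : ((a.val - 1 : ℕ) : ZMod (2*c+1)) + 1 = ((a.val - 1 + 1 : ℕ) : ZMod (2*c+1)) := by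
        push_cast; ring
      rw [h1, show a.val - 1 + 1 = a.val by omega, natCast_val]
  · refine ⟨2*(2*c+1 - a.val), by omega, ?_⟩
    rw [zig_even]
    have h1 : ((2*c+1 - a.val : ℕ) : ZMod (2*c+1)) + ((a.val : ℕ) : ZMod (2*c+1))
        = ((2*c+1 : ℕ) : ZMod (2*c+1)) := by
      rw [← Nat.cast_add]; congr 1; omega
    rw [ZMod.natCast_self] at h1
    rw [natCast_val] at h1
    linear_combination -h1

/-- consecutive sums in the zig-zag sequence -/
lemma zig_sum_odd (b : ℕ) : zig c (2*b) + zig c (2*b+1) = 1 := by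
  rw [zig_even, zig_odd]; ring

lemma zig_sum_even (b : ℕ) (hb : 1 ≤ b) : zig c (2*b-1) + zig c (2*b) = 0 := by
  have : 2*b-1 = 2*(b-1)+1 := by omega
  rw [this, zig_odd, zig_even]
  have : ((b:ℕ) : ZMod (2*c+1)) = ((b-1 : ℕ) : ZMod (2*c+1)) + 1 := by
    push_cast [Nat.cast_sub hb]; ring
  rw [this]; ring
lemma zig_odd' (b : ℕ) (hb : 1 ≤ b) : zig c (2*b-1) = (b : ZMod (2*c+1)) := by
  have h := zig_sum_even (c := c) b hb
  rw [zig_even] at h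
  linear_combination h

lemma cast_compl (a : ZMod (2*c+1)) : ((2*c+1 - a.val : ℕ) : ZMod (2*c+1)) = -a := by
  have hv := ZMod.val_lt a
  have h1 : ((2*c+1 - a.val : ℕ) : ZMod (2*c+1)) + ((a.val : ℕ) : ZMod (2*c+1))
      = ((2*c+1 : ℕ) : ZMod (2*c+1)) := by
    rw [← Nat.cast_add]; congr 1; omega
  rw [ZMod.natCast_self, natCast_val] at h1
  linear_combination h1

/-- the vertex sequence of the `i`-th Hamilton cycle -/
def fseq (i : ZMod (2*c+1)) (t : ℕ) : Fin (2*c+2) :=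
  if 1 ≤ t ∧ t ≤ 2*c+1 then emb (i + zig c (t-1)) else inf c

lemma fseq_zero (i : ZMod (2*c+1)) : fseq i 0 = inf c := by simp [fseq]

lemma fseq_top (i : ZMod (2*c+1)) : fseq i (2*c+2) = inf c := by
  have : ¬ (1 ≤ 2*c+2 ∧ 2*c+2 ≤ 2*c+1) := by omega
  simp [fseq, this]

lemma fseq_mid (i : ZMod (2*c+1)) {t : ℕ} (h1 : 1 ≤ t) (h2 : t ≤ 2*c+1) :
    fseq i t = emb (i + zig c (t-1)) := by simp [fseq, h1, h2]

lemma fseq_one (i : ZMod (2*c+1)) : fseq i 1 = emb i := by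
  rw [fseq_mid i le_rfl (by omega)]
  simp [zig_zero]

lemma fseq_last (i : ZMod (2*c+1)) : fseq i (2*c+1) = emb (i - (c : ZMod (2*c+1))) := by
  rw [fseq_mid i (by omega) le_rfl]
  rw [show 2*c+1-1 = 2*c from rfl, zig_even]
  ring_nf

lemma fseq_adj (i : ZMod (2*c+1)) : ∀ t < 2*c+2, fseq i t ≠ fseq i (t+1) := by
  intro t ht
  rcases Nat.eq_zero_or_pos t with rfl | h1
  · rw [fseq_zero, fseq_one]
    exact (emb_ne_inf i).symm
  rcases Nat.lt_or_ge t (2*c+1) with h2 | h2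
  · rw [fseq_mid i h1 (by omega), fseq_mid i (by omega) (by omega)]
    intro h
    have h3 := emb_inj h
    have h4 : zig c (t-1) = zig c (t+1-1) := by
      have := add_left_cancel h3
      simpa using this
    have := zig_inj (by omega) (by omega) h4
    omega
  · have ht2 : t = 2*c+1 := by omega
    subst ht2
    rw [fseq_last, fseq_top]
    exact emb_ne_inf _

/-- the `i`-th Hamilton cycle as a closed walk from `inf` -/
def walkI (i : ZMod (2*c+1)) : (⊤ : SimpleGraph (Fin (2*c+2))).Walk (inf c) (inf c) :=
  (mkWalk (fseq i) (2*c+2) (fseq_adj i)).copy (fseq_zero i) (fseq_top i)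

lemma edges_walkI (i : ZMod (2*c+1)) :
    (walkI i).edges = (List.range (2*c+2)).map (fun t => s(fseq i t, fseq i (t+1))) := by
  rw [walkI, SimpleGraph.Walk.edges_copy, edges_mkWalk]

lemma support_walkI (i : ZMod (2*c+1)) :
    (walkI i).support = (List.range (2*c+3)).map (fseq i) := by
  rw [walkI, SimpleGraph.Walk.support_copy, support_mkWalk]

lemma inf_not_mem_finite (x y : ZMod (2*c+1)) (e : Sym2 (Fin (2*c+2)))
    (h : e = s(emb x, emb y)) : inf c ∉ e := by
  subst h
  rw [Sym2.mem_iff]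
  push_neg
  exact ⟨(emb_ne_inf x).symm, (emb_ne_inf y).symm⟩

/-- characterization of the edges of the `i`-th cycle -/
lemma mem_edges_walkI {i : ZMod (2*c+1)} {e : Sym2 (Fin (2*c+2))} :
    e ∈ (walkI i).edges ↔
      e = s(inf c, emb i) ∨ e = s(inf c, emb (i - (c : ZMod (2*c+1)))) ∨
      ∃ x y : ZMod (2*c+1), x ≠ y ∧ (x + y = 2*i ∨ x + y = 2*i + 1) ∧ e = s(emb x, emb y) := by
  rw [edges_walkI, List.mem_map]
  constructor
  · rintro ⟨t, ht, rfl⟩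
    rw [List.mem_range] at ht
    rcases Nat.eq_zero_or_pos t with rfl | h1
    · left; rw [fseq_zero, fseq_one]
    rcases Nat.lt_or_ge t (2*c+1) with h2 | h2
    · -- finite edge
      right; right
      refine ⟨i + zig c (t-1), i + zig c t, ?_, ?_, ?_⟩
      · intro h
        have := add_left_cancel h
        have := zig_inj (c := c) (by omega) (by omega) this
        omega
      · rcases Nat.even_or_odd t with ⟨b, hb⟩ | ⟨b, hb⟩
        · left
          have hb' : t = 2*b := by omega
          subst hb'
          have h3 := zig_sum_even (c := c) b (by omega)
          linear_combination h3
        · right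
          have hb' : t = 2*b+1 := by omega
          subst hb'
          simp only [Nat.add_sub_cancel]
          have h3 := zig_sum_odd (c := c) b
          linear_combination h3
      · rw [fseq_mid i h1 (by omega), fseq_mid i (by omega) (by omega)]
        simp only [Nat.add_sub_cancel]
    · have ht2 : t = 2*c+1 := by omega
      subst ht2
      right; left
      rw [fseq_last, fseq_top, Sym2.eq_swap]
  · rintro (rfl | rfl | ⟨x, y, hxy, hsum, rfl⟩)
    · exact ⟨0, by simp, by rw [fseq_zero, fseq_one]⟩
    · exact ⟨2*c+1, by rw [List.mem_range]; omega,
        by rw [fseq_last, fseq_top, Sym2.eq_swap]⟩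
    · -- finite edge: find the position
      rcases hsum with hsum | hsum
      · -- sum 2i
        have ha0 : x - i ≠ 0 := by
          intro h0
          apply hxy
          have hx : x = i := by linear_combination h0
          have hy : y = i := by linear_combination hsum - h0
          rw [hx, hy]
        have hav : 1 ≤ (x - i).val ∧ (x - i).val ≤ 2*c := by
          have hl := ZMod.val_lt (x - i)
          have h2 : (x - i).val ≠ 0 := fun h =>
            ha0 (by rw [← natCast_val (x - i), h]; simp)
          omega
        obtain ⟨b, hb1, hb2, hb3⟩ : ∃ b : ℕ, 1 ≤ b ∧ b ≤ c ∧
            ((b : ZMod (2*c+1)) = x - i ∨ (b : ZMod (2*c+1)) = -(x - i)) := by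
          rcases Nat.lt_or_ge (x - i).val (c+1) with h | h
          · exact ⟨(x - i).val, hav.1, by omega, Or.inl (natCast_val _)⟩
          · exact ⟨2*c+1 - (x - i).val, by omega, by omega, Or.inr (cast_compl _)⟩
        refine ⟨2*b, by rw [List.mem_range]; omega, ?_⟩
        rw [fseq_mid i (by omega) (by omega), fseq_mid i (by omega) (by omega)]
        simp only [Nat.add_sub_cancel]
        rw [zig_odd' b hb1, zig_even]
        rcases hb3 with hb3 | hb3
        · have h1 : i + (b : ZMod (2*c+1)) = x := by rw [hb3]; ring
          have h2 : i + -(b : ZMod (2*c+1)) = y := by rw [hb3]; linear_combination -hsum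
          rw [h1, h2]
        · have h1 : i + (b : ZMod (2*c+1)) = y := by rw [hb3]; linear_combination -hsum
          have h2 : i + -(b : ZMod (2*c+1)) = x := by rw [hb3]; ring
          rw [h1, h2, Sym2.eq_swap]
      · -- sum 2i+1
        have hya : y - i = 1 - (x - i) := by linear_combination hsum
        have hane : x - i ≠ 1 - (x - i) := by
          intro h0
          exact hxy (by linear_combination h0 - hya)
        obtain ⟨b, hb1, hb2, hb3⟩ : ∃ b : ℕ, 1 ≤ b ∧ b ≤ c ∧
            ((b : ZMod (2*c+1)) = x - i ∨ (b : ZMod (2*c+1)) = 1 - (x - i)) := by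
          have hl := ZMod.val_lt (x - i)
          have hc1 : 1 ≤ c := by
            by_contra hc0
            have hc0' : c = 0 := by omega
            subst hc0'
            apply hane
            have hz : ∀ z : ZMod (2*0+1), z = 0 := by
              intro z
              have hzv : z.val = 0 := by have := ZMod.val_lt z; omega
              rw [← natCast_val z, hzv]; simp
            exact (hz _).trans (hz _).symm
          rcases Nat.lt_or_ge (x - i).val (c+1) with h | h
          · rcases Nat.eq_zero_or_pos (x - i).val with h0 | h0
            · refine ⟨1, le_rfl, hc1, Or.inr ?_⟩
              have hxi : x - i = 0 := by rw [← natCast_val (x - i), h0]; simp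
              rw [hxi]; simp
            · exact ⟨(x - i).val, h0, by omega, Or.inl (natCast_val _)⟩
          · have hne : (x - i).val ≠ c+1 := by
              intro hv
              apply hane
              have h2 : (x - i) + (x - i)
                  = ((c+1 : ℕ) : ZMod (2*c+1)) + ((c+1 : ℕ) : ZMod (2*c+1)) := by
                rw [← hv, natCast_val]
              have h3 : ((c+1 : ℕ) : ZMod (2*c+1)) + ((c+1 : ℕ) : ZMod (2*c+1))
                  = ((2*c+1 : ℕ) : ZMod (2*c+1)) + 1 := by push_cast; ring
              rw [ZMod.natCast_self] at h3
              have h4 : (x - i) + (x - i) = 1 := by rw [h2, h3]; ring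
              linear_combination h4
            refine ⟨2*c+2 - (x - i).val, by omega, by omega, Or.inr ?_⟩
            have h5 : ((2*c+2 - (x - i).val : ℕ) : ZMod (2*c+1)) + (((x - i).val : ℕ) : ZMod (2*c+1))
                = ((2*c+2 : ℕ) : ZMod (2*c+1)) := by
              rw [← Nat.cast_add]; congr 1; omega
            have h6 : ((2*c+2 : ℕ) : ZMod (2*c+1)) = 1 := by
              rw [show (2*c+2 : ℕ) = (2*c+1) + 1 by omega, Nat.cast_add, ZMod.natCast_self]
              simp
            rw [h6, natCast_val] at h5
            linear_combination h5
        refine ⟨2*b-1, by rw [List.mem_range]; omega, ?_⟩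
        rw [fseq_mid i (by omega) (by omega), fseq_mid i (by omega) (by omega)]
        rw [show 2*b-1+1-1 = 2*b-1 by omega]
        rw [show 2*b-1-1 = 2*(b-1) by omega, zig_even, zig_odd' b hb1]
        have hcast : ((b-1 : ℕ) : ZMod (2*c+1)) = (b : ZMod (2*c+1)) - 1 := by
          push_cast [Nat.cast_sub hb1]; ring
        rw [hcast]
        rcases hb3 with hb3 | hb3
        · have h1 : i + -((b:ZMod (2*c+1)) - 1) = y := by rw [hb3]; linear_combination -hsum
          have h2 : i + (b:ZMod (2*c+1)) = x := by rw [hb3]; ring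
          rw [h1, h2, Sym2.eq_swap]
        · have h1 : i + -((b:ZMod (2*c+1)) - 1) = x := by rw [hb3]; ring
          have h2 : i + (b:ZMod (2*c+1)) = y := by rw [hb3]; linear_combination -hsum
          rw [h1, h2]
lemma length_mkWalk (g : ℕ → Fin (2*c+2)) (L : ℕ) (h : ∀ t < L, g t ≠ g (t+1)) :
    (mkWalk g L h).length = L := by
  induction L with
  | zero => simp [mkWalk]
  | succ L ih => rw [mkWalk, SimpleGraph.Walk.length_concat, ih]

lemma fseq_succ_inj (i : ZMod (2*c+1)) {t t' : ℕ} (ht : t < 2*c+2) (ht' : t' < 2*c+2)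
    (h : fseq i (t+1) = fseq i (t'+1)) : t = t' := by
  rcases Nat.lt_or_ge t (2*c+1) with h1 | h1 <;> rcases Nat.lt_or_ge t' (2*c+1) with h2 | h2
  · rw [fseq_mid i (by omega) (by omega), fseq_mid i (by omega) (by omega)] at h
    simp only [Nat.add_sub_cancel] at h
    exact zig_inj (by omega) (by omega) (add_left_cancel (emb_inj h))
  · have : t' = 2*c+1 := by omega
    subst this
    rw [fseq_top, fseq_mid i (by omega) (by omega)] at h
    exact absurd h (emb_ne_inf _)
  · have : t = 2*c+1 := by omega
    subst this
    rw [fseq_top, fseq_mid i (by omega) (by omega)] at h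
    exact absurd h.symm (emb_ne_inf _)
  · omega

lemma support_tail_walkI (i : ZMod (2*c+1)) :
    (walkI i).support.tail = (List.range (2*c+2)).map (fun t => fseq i (t+1)) := by
  rw [support_walkI, List.range_succ_eq_map, List.map_cons, List.tail_cons, List.map_map]
  rfl

lemma support_tail_nodup (i : ZMod (2*c+1)) : (walkI i).support.tail.Nodup := by
  rw [support_tail_walkI]
  refine List.Nodup.map_on ?_ List.nodup_range
  intro t ht t' ht' h
  rw [List.mem_range] at ht ht'
  exact fseq_succ_inj i ht ht' h

lemma mem_support_tail (i : ZMod (2*c+1)) (v : Fin (2*c+2)) :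
    v ∈ (walkI i).support.tail := by
  rw [support_tail_walkI, List.mem_map]
  rcases Nat.lt_or_ge v.val (2*c+1) with hv | hv
  · obtain ⟨t, ht, hzt⟩ := zig_surj ((v.val : ZMod (2*c+1)) - i)
    refine ⟨t, by rw [List.mem_range]; omega, ?_⟩
    rw [fseq_mid i (by omega) (by omega)]
    simp only [Nat.add_sub_cancel]
    rw [hzt]
    apply Fin.ext
    show (i + ((v.val : ZMod (2*c+1)) - i)).val = v.val
    rw [show i + ((v.val : ZMod (2*c+1)) - i) = (v.val : ZMod (2*c+1)) by ring]
    exact ZMod.val_cast_of_lt hv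
  · refine ⟨2*c+1, by rw [List.mem_range]; omega, ?_⟩
    rw [fseq_top]
    apply Fin.ext
    have := v.isLt
    show 2*c+1 = v.val
    omega

lemma edges_nodup (hc : 1 ≤ c) (i : ZMod (2*c+1)) : (walkI i).edges.Nodup := by
  rw [edges_walkI]
  refine List.Nodup.map_on ?_ List.nodup_range
  have hcz : (c : ZMod (2*c+1)) ≠ 0 := cast_ne_zero hc (by omega)
  have key : ∀ t < 2*c+2, ∀ t' < 2*c+2, t < t' →
      s(fseq i t, fseq i (t+1)) ≠ s(fseq i t', fseq i (t'+1)) := by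
    intro t ht t' ht' hlt h
    rcases Nat.eq_zero_or_pos t with rfl | h1
    · rcases Nat.lt_or_ge t' (2*c+1) with h2 | h2
      · -- 0 vs mid
        have hmem : inf c ∈ s(fseq i 0, fseq i 1) := by rw [fseq_zero]; simp
        rw [h] at hmem
        rw [fseq_mid i (by omega) (by omega), fseq_mid i (by omega) (by omega)] at hmem
        exact inf_not_mem_finite _ _ _ rfl hmem
      · -- 0 vs last
        have h2' : t' = 2*c+1 := by omega
        subst h2'
        rw [fseq_zero, fseq_one, fseq_last, fseq_top, Sym2.eq_iff] at h
        rcases h with ⟨ha, _⟩ | ⟨_, hb⟩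
        · exact (emb_ne_inf _) ha.symm
        · have h3 := emb_inj hb
          exact hcz (by linear_combination h3)
    · rcases Nat.lt_or_ge t' (2*c+1) with h2 | h2
      · -- mid vs mid
        rw [fseq_mid i (by omega) (by omega), fseq_mid i (by omega) (by omega),
          fseq_mid i (by omega) (by omega), fseq_mid i (by omega) (by omega),
          Sym2.eq_iff] at h
        simp only [Nat.add_sub_cancel] at h
        rcases h with ⟨ha, hb⟩ | ⟨ha, hb⟩
        · have e1 := zig_inj (c := c) (by omega) (by omega)
            (add_left_cancel (emb_inj ha))
          omega
        · have e1 := zig_inj (c := c) (by omega) (by omega)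
            (add_left_cancel (emb_inj ha))
          have e2 := zig_inj (c := c) (by omega) (by omega)
            (add_left_cancel (emb_inj hb))
          omega
      · -- mid vs last
        have h2' : t' = 2*c+1 := by omega
        subst h2'
        have hmem : inf c ∈ s(fseq i (2*c+1), fseq i (2*c+2)) := by rw [fseq_top]; simp
        rw [← h] at hmem
        rw [fseq_mid i (by omega) (by omega), fseq_mid i (by omega) (by omega)] at hmem
        exact inf_not_mem_finite _ _ _ rfl hmem
  intro t ht t' ht' h
  rw [List.mem_range] at ht ht'
  rcases Nat.lt_trichotomy t t' with hlt | he | hlt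
  · exact absurd h (key t ht t' ht' hlt)
  · exact he
  · exact absurd h.symm (key t' ht' t ht hlt)

lemma walkI_not_nil (i : ZMod (2*c+1)) : walkI i ≠ SimpleGraph.Walk.nil := by
  intro h
  have hl : (walkI i).length = 2*c+2 := by
    rw [walkI, SimpleGraph.Walk.length_copy, length_mkWalk]
  rw [h] at hl
  simp at hl

lemma walkI_isHamiltonianCycle (hc : 1 ≤ c) (i : ZMod (2*c+1)) :
    (walkI i).IsHamiltonianCycle := by
  rw [SimpleGraph.Walk.isHamiltonianCycle_iff_isCycle_and_support_count_tail_eq_one]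
  constructor
  · rw [SimpleGraph.Walk.isCycle_def]
    exact ⟨(SimpleGraph.Walk.isTrail_def _).mpr (edges_nodup hc i), walkI_not_nil i,
      support_tail_nodup i⟩
  · intro v
    exact List.count_eq_one_of_mem (support_tail_nodup i) (mem_support_tail i v)
/-- mod relation: 2c+1 = 0 -/
lemma relc : 2*(c : ZMod (2*c+1)) + 1 = 0 := by
  have h := ZMod.natCast_self (2*c+1)
  push_cast at h
  linear_combination h

/-- the label function used for the perfect matching -/
def sig (v : Fin (2*c+2)) : ZMod (2*c+1) :=
  if v.val < 2*c+1 then (v.val : ZMod (2*c+1)) else (c : ZMod (2*c+1))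

lemma sig_emb (x : ZMod (2*c+1)) : sig (emb x) = x := by
  have := ZMod.val_lt x
  rw [sig, if_pos (by exact this)]
  exact natCast_val x

lemma sig_inf : sig (inf c) = (c : ZMod (2*c+1)) := by
  rw [sig, if_neg (by simp [inf])]

lemma sig_fiber {w : Fin (2*c+2)} {y : ZMod (2*c+1)} (h : sig w = y) :
    w = emb y ∨ (w = inf c ∧ y = (c : ZMod (2*c+1))) := by
  rw [sig] at h
  split_ifs at h with hw
  · left
    apply Fin.ext
    show w.val = y.val
    rw [← h, ZMod.val_cast_of_lt hw]
  · right
    have := w.isLt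
    exact ⟨Fin.ext (by show w.val = 2*c+1; omega), h.symm⟩

/-- the perfect matching subgraph -/
def MG (c : ℕ) : (⊤ : SimpleGraph (Fin (2*c+2))).Subgraph where
  verts := Set.univ
  Adj a b := a ≠ b ∧ sig a + sig b = -1
  adj_sub h := by simpa using h.1
  edge_vert _ := Set.mem_univ _
  symm := ⟨fun a b h => ⟨h.1.symm, by linear_combination h.2⟩⟩

lemma mg_adj {a b : Fin (2*c+2)} : (MG c).Adj a b ↔ a ≠ b ∧ sig a + sig b = -1 := Iff.rfl

lemma mg_perfect : (MG c).IsPerfectMatching := by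
  rw [SimpleGraph.Subgraph.isPerfectMatching_iff]
  intro v
  have huniq : ∀ w w', (MG c).Adj v w → (MG c).Adj v w' → w = w' := by
    intro w w' ⟨h1, h2⟩ ⟨h1', h2'⟩
    have hs : sig w' = sig w := by linear_combination h2' - h2
    rcases sig_fiber (rfl : sig w = sig w) with hw | ⟨hw, hwc⟩ <;>
      rcases sig_fiber hs with hw' | ⟨hw', hwc'⟩
    · rw [hw', ← hw]
    · -- w = emb (sig w), w' = inf, sig w = c
      exfalso
      have h3 : sig v + (c : ZMod (2*c+1)) = -1 := by rw [← hwc', ← hs]; exact h2'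
      have hsv : sig v = (c : ZMod (2*c+1)) := by linear_combination h3 - relc
      rcases sig_fiber hsv with hv | ⟨hv, _⟩
      · apply h1
        rw [hv, hw, hwc']
      · rw [hw'] at h1'; exact h1' hv
    · exfalso
      have h3 : sig v + (c : ZMod (2*c+1)) = -1 := by rw [← hwc]; exact h2
      have hsv : sig v = (c : ZMod (2*c+1)) := by linear_combination h3 - relc
      rcases sig_fiber hsv with hv | ⟨hv, _⟩
      · apply h1'
        rw [hv, hw', hwc]
      · exact h1 (hv.trans hw.symm)
    · rw [hw, hw']
  by_cases hv : sig v = (c : ZMod (2*c+1))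
  · rcases sig_fiber hv with hveq | ⟨hveq, _⟩
    · -- v = emb c, partner inf
      refine ⟨inf c, ⟨?_, ?_⟩, fun w hw => huniq w (inf c) hw ?_⟩
      · rw [hveq]; exact (emb_ne_inf _)
      · rw [hv, sig_inf]; linear_combination relc
      · exact ⟨by rw [hveq]; exact (emb_ne_inf _), by rw [hv, sig_inf]; linear_combination relc⟩
    · -- v = inf, partner emb c
      refine ⟨emb (c : ZMod (2*c+1)), ⟨?_, ?_⟩, fun w hw => huniq w _ hw ?_⟩
      · rw [hveq]; exact (emb_ne_inf _).symm
      · rw [hv, sig_emb]; linear_combination relc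
      · exact ⟨by rw [hveq]; exact (emb_ne_inf _).symm,
          by rw [hv, sig_emb]; linear_combination relc⟩
  · -- generic vertex
    refine ⟨emb (-1 - sig v), ⟨?_, ?_⟩, fun w hw => huniq w _ hw ?_⟩
    · intro h
      apply hv
      have h2 : sig v = -1 - sig v := by
        nth_rewrite 1 [h]
        rw [sig_emb]
      linear_combination ((c : ZMod (2*c+1)) + 1) * h2 - (sig v + 1) * relc
    · rw [sig_emb]; ring
    · constructor
      · intro h
        apply hv
        have h2 : sig v = -1 - sig v := by
          nth_rewrite 1 [h]
          rw [sig_emb]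
        linear_combination ((c : ZMod (2*c+1)) + 1) * h2 - (sig v + 1) * relc
      · rw [sig_emb]; ring
lemma helperA {x y : ZMod (2*c+1)} (h : s(inf c, emb x) = s(inf c, emb y)) : x = y := by
  rw [Sym2.eq_iff] at h
  rcases h with ⟨_, hb⟩ | ⟨ha, _⟩
  · exact emb_inj hb
  · exact absurd ha.symm (emb_ne_inf _)

lemma helperB {x u v : ZMod (2*c+1)} (h : s(inf c, emb x) = s(emb u, emb v)) : False := by
  have hm : inf c ∈ s(inf c, emb x) := by simp
  rw [h] at hm
  exact inf_not_mem_finite u v _ rfl hm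

lemma helperC {x y u v : ZMod (2*c+1)} (h : s(emb x, emb y) = s(emb u, emb v)) :
    x + y = u + v := by
  rw [Sym2.eq_iff] at h
  rcases h with ⟨ha, hb⟩ | ⟨ha, hb⟩
  · rw [emb_inj ha, emb_inj hb]
  · rw [emb_inj ha, emb_inj hb]; ring

lemma neg_one_cast : (-1 : ZMod (2*c+1)) = ((2*c : ℕ) : ZMod (2*c+1)) := by
  push_cast
  linear_combination -relc

lemma cycle_edge_disjoint {i j : ℕ} (hi : i < c) (hj : j < c) (hij : i ≠ j)
    {e : Sym2 (Fin (2*c+2))} (hei : e ∈ (walkI ((i:ℕ) : ZMod (2*c+1))).edges)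
    (hej : e ∈ (walkI ((j:ℕ) : ZMod (2*c+1))).edges) : False := by
  rw [mem_edges_walkI] at hei hej
  have conj : ∀ a b : ℕ, a < 2*c+1 → b < 2*c+1 → a ≠ b →
      ((a:ℕ) : ZMod (2*c+1)) = ((b:ℕ) : ZMod (2*c+1)) → False := by
    intro a b ha hb hne h
    exact hne (cast_inj ha hb h)
  rcases hei with h1 | h1 | ⟨x, y, hxy, hsx, h1⟩ <;> subst h1 <;>
    rcases hej with h2 | h2 | ⟨x', y', hxy', hsx', h2⟩
  · exact conj i j (by omega) (by omega) hij (helperA h2)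
  · have h3 := helperA h2
    refine conj (i + c) j (by omega) (by omega) (by omega) ?_
    push_cast
    linear_combination h3
  · exact helperB h2
  · have h3 := helperA h2
    refine conj i (j + c) (by omega) (by omega) (by omega) ?_
    push_cast
    linear_combination h3
  · have h3 := helperA h2
    exact conj i j (by omega) (by omega) hij (by push_cast; linear_combination h3)
  · exact helperB h2
  · exact helperB h2.symm
  · exact helperB h2.symm
  · have h3 := helperC h2
    rcases hsx with hs | hs <;> rcases hsx' with hs' | hs' <;>
      rw [hs, hs'] at h3
    · exact conj (2*i) (2*j) (by omega) (by omega) (by omega)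
        (by push_cast; linear_combination h3)
    · exact conj (2*i) (2*j+1) (by omega) (by omega) (by omega)
        (by push_cast; linear_combination h3)
    · exact conj (2*i+1) (2*j) (by omega) (by omega) (by omega)
        (by push_cast; linear_combination h3)
    · exact conj (2*i+1) (2*j+1) (by omega) (by omega) (by omega)
        (by push_cast; linear_combination h3)

lemma cycle_M_disjoint {i : ℕ} (hi : i < c)
    {e : Sym2 (Fin (2*c+2))} (hei : e ∈ (walkI ((i:ℕ) : ZMod (2*c+1))).edges)
    (heM : e ∈ (MG c).edgeSet) : False := by
  rw [mem_edges_walkI] at hei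
  have conj : ∀ a b : ℕ, a < 2*c+1 → b < 2*c+1 → a ≠ b →
      ((a:ℕ) : ZMod (2*c+1)) = ((b:ℕ) : ZMod (2*c+1)) → False := by
    intro a b ha hb hne h
    exact hne (cast_inj ha hb h)
  rcases hei with h1 | h1 | ⟨x, y, hxy, hsx, h1⟩ <;> subst h1 <;>
      rw [SimpleGraph.Subgraph.mem_edgeSet] at heM <;>
      obtain ⟨hne, hsum⟩ := heM
  · rw [sig_inf, sig_emb] at hsum
    refine conj (i + c) (2*c) (by omega) (by omega) (by omega) ?_
    rw [← neg_one_cast]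
    push_cast
    linear_combination hsum
  · rw [sig_inf, sig_emb] at hsum
    refine conj i (2*c) (by omega) (by omega) (by omega) ?_
    rw [← neg_one_cast]
    push_cast
    linear_combination hsum
  · rw [sig_emb, sig_emb] at hsum
    rcases hsx with hs | hs <;> rw [hs] at hsum
    · refine conj (2*i) (2*c) (by omega) (by omega) (by omega) ?_
      rw [← neg_one_cast]
      push_cast
      linear_combination hsum
    · refine conj (2*i+1) (2*c) (by omega) (by omega) (by omega) ?_
      rw [← neg_one_cast]
      push_cast
      linear_combination hsum
lemma cover_inf (x : ZMod (2*c+1)) :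
    (∃ i : Fin c, s(inf c, emb x) ∈ (walkI ((i : ℕ) : ZMod (2*c+1))).edges) ∨
      s(inf c, emb x) ∈ (MG c).edgeSet := by
  have hv := ZMod.val_lt x
  rcases Nat.lt_trichotomy x.val c with h | h | h
  · left
    refine ⟨⟨x.val, h⟩, ?_⟩
    rw [mem_edges_walkI]
    left
    rw [natCast_val]
  · right
    rw [SimpleGraph.Subgraph.mem_edgeSet]
    refine ⟨(emb_ne_inf x).symm, ?_⟩
    rw [sig_inf, sig_emb, ← natCast_val x, h]
    linear_combination relc
  · left
    refine ⟨⟨x.val - (c+1), by omega⟩, ?_⟩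
    rw [mem_edges_walkI]
    right; left
    have h5 : ((x.val + c : ℕ) : ZMod (2*c+1)) = ((x.val - (c+1) : ℕ) : ZMod (2*c+1)) := by
      rw [show x.val + c = (x.val - (c+1)) + (2*c+1) by omega, Nat.cast_add,
        ZMod.natCast_self, add_zero]
    have hxx : x = ((x.val - (c+1) : ℕ) : ZMod (2*c+1)) - (c : ZMod (2*c+1)) := by
      rw [← h5]
      push_cast
      rw [natCast_val]
      ring
    show s(inf c, emb x)
        = s(inf c, emb (((x.val - (c+1) : ℕ) : ZMod (2*c+1)) - (c : ZMod (2*c+1))))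
    rw [← hxx]

lemma cover_fin (x y : ZMod (2*c+1)) (hxy : x ≠ y) :
    (∃ i : Fin c, s(emb x, emb y) ∈ (walkI ((i : ℕ) : ZMod (2*c+1))).edges) ∨
      s(emb x, emb y) ∈ (MG c).edgeSet := by
  by_cases hsum : x + y = -1
  · right
    rw [SimpleGraph.Subgraph.mem_edgeSet]
    refine ⟨fun h => hxy (emb_inj h), ?_⟩
    rw [sig_emb, sig_emb]
    exact hsum
  · left
    have hvlt := ZMod.val_lt (x + y)
    have hvne : (x + y).val ≠ 2*c := by
      intro h
      apply hsum
      rw [← natCast_val (x + y), h, ← neg_one_cast]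
    refine ⟨⟨(x + y).val / 2, by omega⟩, ?_⟩
    rw [mem_edges_walkI]
    right; right
    refine ⟨x, y, hxy, ?_, rfl⟩
    rcases Nat.even_or_odd (x + y).val with ⟨b, hb⟩ | ⟨b, hb⟩
    · left
      have hb2 : (x+y).val / 2 = b := by omega
      show x + y = 2 * (((x + y).val / 2 : ℕ) : ZMod (2*c+1))
      rw [hb2, ← natCast_val (x + y), hb]
      push_cast
      ring
    · right
      have hb2 : (x+y).val / 2 = b := by omega
      show x + y = 2 * (((x + y).val / 2 : ℕ) : ZMod (2*c+1)) + 1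
      rw [hb2, ← natCast_val (x + y), hb]
      push_cast
      ring

lemma cover (e : Sym2 (Fin (2*c+2))) (he : e ∈ (⊤ : SimpleGraph (Fin (2*c+2))).edgeSet) :
    (∃ i : Fin c, e ∈ (walkI ((i : ℕ) : ZMod (2*c+1))).edges) ∨ e ∈ (MG c).edgeSet := by
  induction e with
  | _ a b =>
    rw [SimpleGraph.mem_edgeSet, SimpleGraph.top_adj] at he
    have ha := a.isLt
    have hb := b.isLt
    rcases Nat.lt_or_ge a.val (2*c+1) with h1 | h1 <;>
      rcases Nat.lt_or_ge b.val (2*c+1) with h2 | h2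
    · have ha' : a = emb ((a.val : ℕ) : ZMod (2*c+1)) := by
        apply Fin.ext
        show a.val = ((a.val : ℕ) : ZMod (2*c+1)).val
        rw [ZMod.val_cast_of_lt h1]
      have hb' : b = emb ((b.val : ℕ) : ZMod (2*c+1)) := by
        apply Fin.ext
        show b.val = ((b.val : ℕ) : ZMod (2*c+1)).val
        rw [ZMod.val_cast_of_lt h2]
      rw [ha', hb']
      refine cover_fin _ _ ?_
      intro h
      apply he
      rw [ha', hb', h]
    · have hb' : b = inf c := Fin.ext (by show b.val = 2*c+1; omega)
      have ha' : a = emb ((a.val : ℕ) : ZMod (2*c+1)) := by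
        apply Fin.ext
        show a.val = ((a.val : ℕ) : ZMod (2*c+1)).val
        rw [ZMod.val_cast_of_lt h1]
      rw [ha', hb', Sym2.eq_swap]
      exact cover_inf _
    · have ha' : a = inf c := Fin.ext (by show a.val = 2*c+1; omega)
      have hb' : b = emb ((b.val : ℕ) : ZMod (2*c+1)) := by
        apply Fin.ext
        show b.val = ((b.val : ℕ) : ZMod (2*c+1)).val
        rw [ZMod.val_cast_of_lt h2]
      rw [ha', hb']
      exact cover_inf _
    · exact absurd (Fin.ext (by omega : a.val = b.val)) he

/-- the transversal edge of the `i`-th cycle -/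
def TE (c i : ℕ) : Sym2 (Fin (2*c+2)) :=
  s(emb ((i : ZMod (2*c+1)) + (((c+1)^2 : ℕ) : ZMod (2*c+1))),
    emb ((i : ZMod (2*c+1)) + (((c+1)^2 : ℕ) : ZMod (2*c+1)) + ((c+1 : ℕ) : ZMod (2*c+1))))

lemma key1 : ((2*(c+1)^2 + (c+1) : ℕ) : ZMod (2*c+1)) = 1 := by
  rw [show 2*(c+1)^2 + (c+1) = (2*c+1)*(c+2) + 1 by ring, Nat.cast_add, Nat.cast_mul,
    ZMod.natCast_self, zero_mul, zero_add, Nat.cast_one]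

lemma TE_mem {i : ℕ} (hi : i < c) : TE c i ∈ (walkI ((i:ℕ) : ZMod (2*c+1))).edges := by
  rw [TE, mem_edges_walkI]
  right; right
  refine ⟨_, _, ?_, Or.inr ?_, rfl⟩
  · intro h
    have h2 : ((c+1 : ℕ) : ZMod (2*c+1)) = 0 := by linear_combination -h
    exact cast_ne_zero (by omega) (by omega) h2
  · have hk := key1 (c := c)
    push_cast at hk ⊢
    linear_combination hk

lemma TE_not_M {i : ℕ} (hi : i < c) : TE c i ∉ (MG c).edgeSet := by
  rw [TE, SimpleGraph.Subgraph.mem_edgeSet]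
  rintro ⟨hne, hsum⟩
  rw [sig_emb, sig_emb] at hsum
  have hk := key1 (c := c)
  have h3 : ((2*i+1 : ℕ) : ZMod (2*c+1)) = ((2*c : ℕ) : ZMod (2*c+1)) := by
    rw [← neg_one_cast]
    push_cast at hk hsum ⊢
    linear_combination hsum - hk
  have := cast_inj (by omega) (by omega) h3
  omega

lemma TE_matching {i j : ℕ} (hi : i < c) (hj : j < c) (hij : i ≠ j)
    (v : Fin (2*c+2)) (hvi : v ∈ TE c i) (hvj : v ∈ TE c j) : False := by
  rw [TE, Sym2.mem_iff] at hvi hvj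
  have conj : ∀ a b : ℕ, a < 2*c+1 → b < 2*c+1 → a ≠ b →
      ((a:ℕ) : ZMod (2*c+1)) = ((b:ℕ) : ZMod (2*c+1)) → False := by
    intro a b ha hb hne h
    exact hne (cast_inj ha hb h)
  rcases hvi with h1 | h1 <;> rcases hvj with h2 | h2 <;>
    rw [h1] at h2 <;> have h3 := emb_inj h2
  · exact conj i j (by omega) (by omega) hij (by linear_combination h3)
  · refine conj i (j + (c+1)) (by omega) (by omega) (by omega) ?_
    push_cast at h3 ⊢
    linear_combination h3
  · refine conj (i + (c+1)) j (by omega) (by omega) (by omega) ?_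
    push_cast at h3 ⊢
    linear_combination h3
  · exact conj i j (by omega) (by omega) hij (by linear_combination h3)
theorem main (c : ℕ) :
    ∃ (cy : Fin c → Σ v : Fin (2*c+2), (⊤ : SimpleGraph (Fin (2*c+2))).Walk v v)
      (M : (⊤ : SimpleGraph (Fin (2*c+2))).Subgraph)
      (T : Fin c → Sym2 (Fin (2*c+2))),
      (∀ i, (cy i).2.IsHamiltonianCycle) ∧
      M.IsPerfectMatching ∧
      (∀ i j, i ≠ j → ∀ e, e ∈ (cy i).2.edges → e ∉ (cy j).2.edges) ∧
      (∀ i, ∀ e ∈ (cy i).2.edges, e ∉ M.edgeSet) ∧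
      (∀ e ∈ (⊤ : SimpleGraph (Fin (2*c+2))).edgeSet,
        (∃ i, e ∈ (cy i).2.edges) ∨ e ∈ M.edgeSet) ∧
      (∀ i, T i ∈ (cy i).2.edges) ∧
      (∀ i, ∀ e ∈ (cy i).2.edges, (∃ j, e = T j) → e = T i) ∧
      (∀ i, T i ∉ M.edgeSet) ∧
      (∀ i j, i ≠ j → ∀ x : Fin (2*c+2), x ∈ T i → x ∉ T j) := by
  refine ⟨fun i => ⟨inf c, walkI (((i : ℕ) : ZMod (2*c+1)))⟩, MG c, fun i => TE c (i : ℕ),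
    ?_, mg_perfect, ?_, ?_, ?_, ?_, ?_, ?_, ?_⟩
  · intro i
    exact walkI_isHamiltonianCycle i.pos _
  · intro i j hij e hei hej
    exact cycle_edge_disjoint i.isLt j.isLt (fun h => hij (Fin.ext h)) hei hej
  · intro i e hei heM
    exact cycle_M_disjoint i.isLt hei heM
  · intro e he
    exact cover e he
  · intro i
    exact TE_mem i.isLt
  · intro i e hei ⟨j, hej⟩
    have hij : i = j := by
      by_contra h
      exact cycle_edge_disjoint i.isLt j.isLt (fun h' => h (Fin.ext h')) hei
        (hej ▸ TE_mem j.isLt)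
    rw [hij] at hei ⊢
    exact hej
  · intro i
    exact TE_not_M i.isLt
  · intro i j hij x hxi hxj
    exact TE_matching i.isLt j.isLt (fun h => hij (Fin.ext h)) x hxi hxj

end Stmt5Aux

/-- Every complete graph `K_{k+1}` with `k` odd admits a decomposition of its edge set into
`(k-1)/2` edge-disjoint Hamilton cycles and one perfect matching, together with a matching
containing one edge from each Hamilton cycle (and no edge of the perfect matching). -/
theorem stmt5 (k : ℕ) (hk : 1 ≤ k) (hko : Odd k) :
    ∃ (c : Fin ((k - 1) / 2) → Σ v : Fin (k + 1), (⊤ : SimpleGraph (Fin (k + 1))).Walk v v)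
      (M : (⊤ : SimpleGraph (Fin (k + 1))).Subgraph)
      (T : Fin ((k - 1) / 2) → Sym2 (Fin (k + 1))),
      (∀ i, (c i).2.IsHamiltonianCycle) ∧
      M.IsPerfectMatching ∧
      (∀ i j, i ≠ j → ∀ e, e ∈ (c i).2.edges → e ∉ (c j).2.edges) ∧
      (∀ i, ∀ e ∈ (c i).2.edges, e ∉ M.edgeSet) ∧
      (∀ e ∈ (⊤ : SimpleGraph (Fin (k + 1))).edgeSet,
        (∃ i, e ∈ (c i).2.edges) ∨ e ∈ M.edgeSet) ∧
      -- the transversal: one edge from each Hamilton cycle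
      (∀ i, T i ∈ (c i).2.edges) ∧
      (∀ i, ∀ e ∈ (c i).2.edges, (∃ j, e = T j) → e = T i) ∧
      -- it contains no edge of the perfect matching
      (∀ i, T i ∉ M.edgeSet) ∧
      -- it is a matching: pairwise vertex-disjoint edges
      (∀ i j, i ≠ j → ∀ x : Fin (k + 1), x ∈ T i → x ∉ T j) := by
  obtain ⟨c, rfl⟩ := hko
  have h1 : (2*c + 1 - 1) / 2 = c := by omega
  rw [h1]
  exact Stmt5Aux.main c
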